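/- For every simple 2-2-AND-BN on n nodes, every control node set U satisfies |U| ≥ n/3. -/

import Mathlib

namespace BN

variable {n : ℕ}

/-- The Boolean function `f` depends on input `j`. -/
def Depends (f : (Fin n → Bool) → Bool) (j : Fin n) : Prop :=
  ∃ x : Fin n → Bool, f (Function.update x j (!(x j))) ≠ f x

/-- The set of incoming nodes of node `i` (Γ⁻). -/
def inSet (F : Fin n → (Fin n → Bool) → Bool) (i : Fin n) : Set (Fin n) :=
  {j | Depends (F i) j}

/-- The set of outgoing nodes of node `i` (Γ⁺). -/
def outSet (F : Fin n → (Fin n → Bool) → Bool) (i : Fin n) : Set (Fin n) :=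
  {j | Depends (F j) i}

/-- The controlled trajectory: nodes in `U` get an xor-control signal. -/
def traj (F : Fin n → (Fin n → Bool) → Bool) (U : Finset (Fin n))
    (u : ℕ → Fin n → Bool) (x0 : Fin n → Bool) : ℕ → Fin n → Bool
  | 0 => x0
  | t + 1 => fun i =>
      if i ∈ U then Bool.xor (u t i) (F i (traj F U u x0 t))
      else F i (traj F U u x0 t)

/-- `U` is a control node set: any initial state can be driven to any target state. -/
def IsControlSet (F : Fin n → (Fin n → Bool) → Bool) (U : Finset (Fin n)) : Prop :=
  ∀ x0 xT : Fin n → Bool, ∃ t : ℕ, 1 ≤ t ∧ ∃ u : ℕ → Fin n → Bool, traj F U u x0 t = xT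

/-- AND of the inputs in `S` (no negations). -/
def andFun (S : Finset (Fin n)) (x : Fin n → Bool) : Bool :=
  decide (∀ j ∈ S, x j = true)

/-- `f` is the conjunction of `k` distinct inputs (no negations). -/
def IsSimpleKAnd (k : ℕ) (f : (Fin n → Bool) → Bool) : Prop :=
  ∃ S : Finset (Fin n), S.card = k ∧ f = andFun S

/-- A simple `k`-`k`-AND-BN: each function is a `k`-input AND (no negations) and
every node has indegree `k` and outdegree `k`. -/
def IsSimpleKKAndBN (k : ℕ) (F : Fin n → (Fin n → Bool) → Bool) : Prop :=
  (∀ i, IsSimpleKAnd k (F i)) ∧ ∀ i, (inSet F i).ncard = k ∧ (outSet F i).ncard = k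

lemma depends_andFun {n : ℕ} (S : Finset (Fin n)) (j : Fin n) :
    Depends (andFun S) j ↔ j ∈ S := by
  constructor
  · rintro ⟨x, hx⟩
    by_contra hj
    apply hx
    rw [andFun, andFun, decide_eq_decide]
    constructor <;> intro h i hi
    · have := h i hi
      rwa [Function.update_of_ne (fun he : i = j => hj (he ▸ hi))] at this
    · have := h i hi
      rwa [Function.update_of_ne (fun he : i = j => hj (he ▸ hi))]
  · intro hj
    refine ⟨fun _ => true, ?_⟩
    have h1 : andFun S (fun _ => true) = true := by simp [andFun]
    have h2 : andFun S (Function.update (fun _ => true) j (!(true))) = false := by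
      simp only [andFun, decide_eq_false_iff_not]
      intro h
      have := h j hj
      simp [Function.update_self] at this
    rw [h1, h2]; simp


/-- For every simple 2-2-AND-BN on `n` nodes, every control node set `U`
satisfies `|U| ≥ n / 3`. -/
theorem stmt12 (n : ℕ) (F : Fin n → (Fin n → Bool) → Bool) (hF : IsSimpleKKAndBN 2 F)
    (U : Finset (Fin n)) (hU : IsControlSet F U) :
    (n : ℚ) / 3 ≤ U.card := by
  obtain ⟨hand, hdeg⟩ := hF
  choose S hScard hSfun using hand
  have hdep : ∀ i j, Depends (F i) j ↔ j ∈ S i := fun i j => by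
    rw [hSfun i]; exact depends_andFun _ _
  have hout : ∀ s : Fin n, (outSet F s).ncard = 2 := fun s => (hdeg s).2
  have hmemout : ∀ a s : Fin n, a ∈ outSet F s ↔ s ∈ S a := fun a s => hdep a s
  -- KEY CLAIM: every node is "covered" by some control node
  have key : ∀ v : Fin n, ∃ u ∈ U, u = v ∨ (S v ∩ S u).Nonempty := by
    intro v
    by_cases hv : v ∈ U
    · exact ⟨v, hv, Or.inl rfl⟩
    by_contra hcon
    push_neg at hcon
    set xT : Fin n → Bool := fun w => decide (w ≠ v) with hxT
    obtain ⟨t, ht, u, htraj⟩ := hU (fun _ => false) xT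
    obtain ⟨t', rfl⟩ : ∃ t', t = t' + 1 := ⟨t - 1, (Nat.succ_pred_eq_of_pos ht).symm⟩
    set y := traj F U u (fun _ => false) t' with hy
    have hstep : ∀ i, i ∉ U → F i y = xT i := by
      intro i hi
      have h1 : traj F U u (fun _ => false) (t' + 1) i = xT i := by rw [htraj]
      simpa [traj, hi, ← hy] using h1
    have hytrue : ∀ s ∈ S v, y s = true := by
      intro s hs
      have hvout : v ∈ outSet F s := (hmemout v s).mpr hs
      obtain ⟨a, ha, hav⟩ := Set.exists_ne_of_one_lt_ncard
        (show 1 < (outSet F s).ncard by rw [hout s]; norm_num) v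
      have haU : a ∉ U := by
        intro hau
        obtain ⟨hne, hempty⟩ := hcon a hau
        exact (Finset.not_nonempty_iff_eq_empty.mpr hempty) ⟨s, Finset.mem_inter.mpr ⟨hs, (hmemout a s).mp ha⟩⟩
      have h2 := hstep a haU
      have hxa : xT a = true := by simp [hxT, hav]
      rw [hxa, hSfun a] at h2
      have h3 := of_decide_eq_true h2
      exact h3 s ((hmemout a s).mp ha)
    have hv' := hstep v hv
    have hxv : xT v = false := by simp [hxT]
    rw [hxv, hSfun v] at hv'
    simp only [andFun, decide_eq_false_iff_not] at hv'
    exact hv' hytrue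
  -- COUNTING: each u ∈ U covers at most 3 nodes
  choose g hgU hgcov using key
  have hfib : ∀ u ∈ U, (Finset.univ.filter (fun v => g v = u)).card ≤ 3 := by
    intro u hu
    obtain ⟨s1, s2, hs12, hS2⟩ := Finset.card_eq_two.mp (hScard u)
    set A := (Set.toFinite (outSet F s1)).toFinset with hA
    set B := (Set.toFinite (outSet F s2)).toFinset with hB
    have hAcard : A.card = 2 := by
      rw [hA, ← Set.ncard_eq_toFinset_card]; exact hout s1
    have hBcard : B.card = 2 := by
      rw [hB, ← Set.ncard_eq_toFinset_card]; exact hout s2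
    have huA : u ∈ A := by
      rw [hA, Set.Finite.mem_toFinset]
      exact (hmemout u s1).mpr (hS2 ▸ Finset.mem_insert_self s1 {s2})
    have huB : u ∈ B := by
      rw [hB, Set.Finite.mem_toFinset]
      exact (hmemout u s2).mpr (hS2 ▸ Finset.mem_insert_of_mem (Finset.mem_singleton_self s2))
    have hsub : Finset.univ.filter (fun v => g v = u) ⊆ A ∪ B := by
      intro v hv
      rw [Finset.mem_filter] at hv
      have hcov := hgcov v
      rw [hv.2] at hcov
      rcases hcov with rfl | ⟨s, hs⟩
      · exact Finset.mem_union_left _ huA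
      · rw [Finset.mem_inter] at hs
        have hsS : s ∈ S u := hs.2
        rw [hS2, Finset.mem_insert, Finset.mem_singleton] at hsS
        have hvout : v ∈ outSet F s := (hmemout v s).mpr hs.1
        rcases hsS with rfl | rfl
        · exact Finset.mem_union_left _ (by rw [hA, Set.Finite.mem_toFinset]; exact hvout)
        · exact Finset.mem_union_right _ (by rw [hB, Set.Finite.mem_toFinset]; exact hvout)
    have hint : 1 ≤ (A ∩ B).card :=
      Finset.card_pos.mpr ⟨u, Finset.mem_inter.mpr ⟨huA, huB⟩⟩
    have hun := Finset.card_union_add_card_inter A B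
    calc (Finset.univ.filter (fun v => g v = u)).card ≤ (A ∪ B).card :=
          Finset.card_le_card hsub
      _ ≤ 3 := by omega
  have hcount : n ≤ 3 * U.card := by
    have h1 : (Finset.univ : Finset (Fin n)).card =
        ∑ u ∈ U, (Finset.univ.filter (fun v => g v = u)).card :=
      Finset.card_eq_sum_card_fiberwise (fun v _ => hgU v)
    have h2 : ∑ u ∈ U, (Finset.univ.filter (fun v => g v = u)).card ≤ ∑ u ∈ U, 3 :=
      Finset.sum_le_sum hfib
    simp only [Finset.sum_const, smul_eq_mul] at h2
    rw [Finset.card_univ, Fintype.card_fin] at h1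
    omega
  rw [div_le_iff₀ (by norm_num : (0:ℚ) < 3)]
  have : (n : ℚ) ≤ ((3 * U.card : ℕ) : ℚ) := by exact_mod_cast hcount
  push_cast at this
  linarith

end BN
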